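/- There exists a function f : {0,1} × [0,1] → {0,1} such that f(1, u) ≥ f(0, u) for all u ∈ [0,1] (Pearl monotonicity of the output in the input), yet there is no linear order on {0,1} with respect to which both u ↦ f(0, u) and u ↦ f(1, u) are monotone nondecreasing functions of u (with [0,1] carrying its standard order). Concretely, f(0, u) = 0 for all u and f(1, u) = 1 if 1/3 ≤ u ≤ 2/3 and 0 otherwise is such a function. -/

import Mathlib

open Set

theorem stmt_11 :
    ∃ f : Fin 2 → ℝ → Fin 2,
      (f = fun x u => if x = 1 ∧ (1/3 : ℝ) ≤ u ∧ u ≤ 2/3 then 1 else 0) ∧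
      (∀ u ∈ Icc (0:ℝ) 1, f 0 u ≤ f 1 u) ∧
      (∀ le : Fin 2 → Fin 2 → Prop, IsLinearOrder (Fin 2) le →
        ¬ ((∀ u₁ ∈ Icc (0:ℝ) 1, ∀ u₂ ∈ Icc (0:ℝ) 1, u₁ ≤ u₂ → le (f 0 u₁) (f 0 u₂)) ∧
           (∀ u₁ ∈ Icc (0:ℝ) 1, ∀ u₂ ∈ Icc (0:ℝ) 1, u₁ ≤ u₂ → le (f 1 u₁) (f 1 u₂)))) := by
  refine ⟨_, rfl, ?_, ?_⟩
  · intro u hu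
    simp only
    split <;> split <;> omega
  · intro le hle ⟨_, h1⟩
    have ha : le 0 1 := by
      have := h1 0 (by constructor <;> norm_num) (1/2) (by constructor <;> norm_num)
        (by norm_num)
      norm_num at this; exact this
    have hb : le 1 0 := by
      have := h1 (1/2) (by constructor <;> norm_num) 1 (by constructor <;> norm_num)
        (by norm_num)
      norm_num at this; exact this
    exact absurd (hle.toIsPartialOrder.toAntisymm.antisymm _ _ ha hb) (by decide)
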